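/- If a simplicial complex X on a finite vertex set is Eulerian of dimension n-1, i.e. for every face σ (including the empty face) one has Σ_{τ ⊇ σ, τ ∈ X} (-1)^{#τ} = (-1)^n, then its f-polynomial f_X(t) = Σ_{σ∈X} t^{#σ} satisfies the Dehn–Sommerville relation f_X(t-1) = (-1)^n f_X(-t). -/
import Mathlib


/-- `X` is a (finite) simplicial complex: it contains the empty face and is
closed under taking subsets of faces. -/
def IsSimplicialComplex {V : Type*} [DecidableEq V] (X : Finset (Finset V)) : Prop :=
  ∅ ∈ X ∧ ∀ σ ∈ X, ∀ τ ⊆ σ, τ ∈ X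

/-- The f-polynomial `f_X(t) = ∑_{σ ∈ X} t^{#σ}` (over ℤ). -/
noncomputable def fPoly {V : Type*} (X : Finset (Finset V)) : Polynomial ℤ :=
  ∑ σ ∈ X, Polynomial.X ^ σ.card

/-- The link of a face `σ`: all faces `τ` with `σ ∪ τ ∈ X` and `σ ∩ τ = ∅`. -/
def link {V : Type*} [DecidableEq V] (X : Finset (Finset V)) (σ : Finset V) :
    Finset (Finset V) :=
  X.filter fun τ => σ ∪ τ ∈ X ∧ Disjoint σ τ

/-- `X` is flag: every set of vertices of `X` that is a clique of the
1-skeleton of `X` is a face of `X`. -/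
def IsFlag {V : Type*} [DecidableEq V] (X : Finset (Finset V)) : Prop :=
  ∀ T : Finset V, (∀ v ∈ T, {v} ∈ X) →
    (∀ v ∈ T, ∀ w ∈ T, v ≠ w → ({v, w} : Finset V) ∈ X) → T ∈ X

open Polynomial Finset in
lemma binom_aux (x y : Polynomial ℤ) {V : Type*} [DecidableEq V] (s : Finset V) :
    (x + y) ^ s.card = ∑ τ ∈ s.powerset, x ^ τ.card * y ^ (s.card - τ.card) := by
  have := Finset.prod_add (fun _ : V => x) (fun _ => y) s
  simp only [prod_const] at this
  rw [this]
  refine Finset.sum_congr rfl fun τ hτ => ?_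
  rw [card_sdiff_of_subset (mem_powerset.mp hτ)]

open Polynomial Finset in
theorem stmt_3 {V : Type*} [DecidableEq V] (n : ℕ) (X : Finset (Finset V))
    (hX : IsSimplicialComplex X)
    (heul : ∀ σ ∈ X, ∑ τ ∈ X.filter (fun τ => σ ⊆ τ), (-1 : ℤ) ^ τ.card = (-1) ^ n) :
    (fPoly X).comp (Polynomial.X - 1) = (-1) ^ n * (fPoly X).comp (-Polynomial.X) := by
  have hC : ∀ p : Polynomial ℤ, (fPoly X).comp p = ∑ σ ∈ X, p ^ σ.card := by
    intro p
    simp [fPoly, Polynomial.eval₂_finset_sum, Polynomial.comp, Polynomial.eval₂_pow]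
  rw [hC, hC]
  have key : ∀ σ ∈ X, (Polynomial.X - 1 : Polynomial ℤ) ^ σ.card
      = ∑ τ ∈ X.filter (· ⊆ σ), Polynomial.X ^ τ.card * (-1) ^ (σ.card - τ.card) := by
    intro σ hσ
    have h1 : (Polynomial.X - 1 : Polynomial ℤ) = Polynomial.X + (-1) := by ring
    rw [h1, binom_aux]
    have hset : X.filter (· ⊆ σ) = σ.powerset := by
      ext τ
      simp only [mem_filter, mem_powerset]
      exact ⟨fun h => h.2, fun h => ⟨hX.2 σ hσ τ h, h⟩⟩
    rw [hset]
  rw [Finset.sum_congr rfl key]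
  simp only [Finset.sum_filter]
  rw [Finset.sum_comm]
  rw [Finset.mul_sum]
  refine Finset.sum_congr rfl fun τ hτ => ?_
  have h2 : ∑ σ ∈ X, (if τ ⊆ σ then (Polynomial.X : Polynomial ℤ) ^ τ.card * (-1) ^ (σ.card - τ.card) else 0)
      = Polynomial.X ^ τ.card * (-1) ^ τ.card *
        ∑ σ ∈ X, (if τ ⊆ σ then ((-1 : Polynomial ℤ)) ^ σ.card else 0) := by
    rw [Finset.mul_sum]
    refine Finset.sum_congr rfl fun σ hσ => ?_
    split_ifs with h
    · have hle : τ.card ≤ σ.card := Finset.card_le_card h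
      have : (σ.card - τ.card) + (τ.card + τ.card) = τ.card + σ.card := by omega
      have hone : ((-1 : Polynomial ℤ)) ^ (τ.card + τ.card) = 1 := by
        rw [← two_mul, pow_mul]; norm_num
      calc (Polynomial.X : Polynomial ℤ) ^ τ.card * (-1) ^ (σ.card - τ.card)
          = Polynomial.X ^ τ.card * ((-1) ^ (σ.card - τ.card) * (-1) ^ (τ.card + τ.card)) := by
            rw [hone]; ring
        _ = Polynomial.X ^ τ.card * (-1) ^ τ.card * (-1) ^ σ.card := by
            rw [← pow_add, this, pow_add]; ring
    · ring
  rw [h2]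
  have h3 : ∑ σ ∈ X, (if τ ⊆ σ then ((-1 : Polynomial ℤ)) ^ σ.card else 0)
      = ((-1 : Polynomial ℤ)) ^ n := by
    have := heul τ hτ
    have : Polynomial.C (∑ σ ∈ X.filter (fun σ => τ ⊆ σ), (-1 : ℤ) ^ σ.card) = Polynomial.C ((-1 : ℤ) ^ n) := by rw [this]
    rw [map_sum] at this
    simp only [map_pow, map_neg, map_one, Finset.sum_filter] at this
    exact this
  rw [h3]
  ring
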